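/- Let (L,[-,-],Δ,α) be a Hom-Lie bialgebra and t ∈ L⊗L with (α⊗α)(t) = t, τ(t) = −t, and (α⊗α⊗α)(ad_x([[t,t]]^α + ↻(α⊗Δ)(t))) = 0 for all x ∈ L, where ↻ denotes the cyclic sum over the three tensor factors. Then (L, [-,-], Δ_t = Δ + ad(t), α) is a Hom-Lie bialgebra. -/

import Mathlib

open TensorProduct

variable {k : Type*} [Field k]
variable {L : Type*} [AddCommGroup L] [Module k L]

/-- `[r₁₂, s₁₃]` -/
noncomputable def c1213 (β : L →ₗ[k] L →ₗ[k] L) (α : L →ₗ[k] L) :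
    (L ⊗[k] L) ⊗[k] (L ⊗[k] L) →ₗ[k] L ⊗[k] (L ⊗[k] L) :=
  (TensorProduct.map (TensorProduct.lift β) (TensorProduct.map α α)) ∘ₗ
    (TensorProduct.tensorTensorTensorComm k L L L L).toLinearMap

/-- `[r₁₂, s₂₃]` -/
noncomputable def c1223 (β : L →ₗ[k] L →ₗ[k] L) (α : L →ₗ[k] L) :
    (L ⊗[k] L) ⊗[k] (L ⊗[k] L) →ₗ[k] L ⊗[k] (L ⊗[k] L) :=
  (TensorProduct.map α ((TensorProduct.map (TensorProduct.lift β) α) ∘ₗ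
      (TensorProduct.assoc k L L L).symm.toLinearMap)) ∘ₗ
    (TensorProduct.assoc k L L (L ⊗[k] L)).toLinearMap

/-- `[r₁₃, s₂₃]` -/
noncomputable def c1323 (β : L →ₗ[k] L →ₗ[k] L) (α : L →ₗ[k] L) :
    (L ⊗[k] L) ⊗[k] (L ⊗[k] L) →ₗ[k] L ⊗[k] (L ⊗[k] L) :=
  (TensorProduct.assoc k L L L).toLinearMap ∘ₗ
    (TensorProduct.map (TensorProduct.map α α) (TensorProduct.lift β)) ∘ₗ
    (TensorProduct.tensorTensorTensorComm k L L L L).toLinearMap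

/-- `[[r,s]]^α = [r₁₂,s₁₃] + [r₁₂,s₂₃] + [r₁₃,s₂₃]` -/
noncomputable def chybe (β : L →ₗ[k] L →ₗ[k] L) (α : L →ₗ[k] L) (r s : L ⊗[k] L) :
    L ⊗[k] (L ⊗[k] L) :=
  c1213 β α (r ⊗ₜ s) + c1223 β α (r ⊗ₜ s) + c1323 β α (r ⊗ₜ s)

/-- `ad_x` on `L ⊗ L`. -/
noncomputable def adT2 (β : L →ₗ[k] L →ₗ[k] L) (α : L →ₗ[k] L) (x : L) :
    L ⊗[k] L →ₗ[k] L ⊗[k] L :=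
  TensorProduct.map (β x) α + TensorProduct.map α (β x)

/-- `ad_x` on `L ⊗ L ⊗ L`. -/
noncomputable def adT3 (β : L →ₗ[k] L →ₗ[k] L) (α : L →ₗ[k] L) (x : L) :
    L ⊗[k] (L ⊗[k] L) →ₗ[k] L ⊗[k] (L ⊗[k] L) :=
  TensorProduct.map (β x) (TensorProduct.map α α) +
    TensorProduct.map α (TensorProduct.map (β x) α) +
    TensorProduct.map α (TensorProduct.map α (β x))

/-- the cyclic permutation on `L ⊗ L ⊗ L`, `x⊗y⊗z ↦ z⊗x⊗y`. -/
noncomputable def cyc : L ⊗[k] (L ⊗[k] L) →ₗ[k] L ⊗[k] (L ⊗[k] L) :=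
  (TensorProduct.comm k (L ⊗[k] L) L).toLinearMap ∘ₗ
    (TensorProduct.assoc k L L L).symm.toLinearMap

/-- the cyclic sum `↻` on `L ⊗ L ⊗ L`. -/
noncomputable def cycSum : L ⊗[k] (L ⊗[k] L) →ₗ[k] L ⊗[k] (L ⊗[k] L) :=
  LinearMap.id + cyc + cyc ∘ₗ cyc

/-- `Δ = ad(r) : x ↦ ad_x(r)` as a linear map. -/
noncomputable def adr (β : L →ₗ[k] L →ₗ[k] L) (α : L →ₗ[k] L) (r : L ⊗[k] L) :
    L →ₗ[k] L ⊗[k] L where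
  toFun x := adT2 β α x r
  map_add' x y := by
    simp only [adT2, map_add, TensorProduct.map_add_left, TensorProduct.map_add_right,
      LinearMap.add_apply]
    abel
  map_smul' c x := by
    simp only [adT2, map_smul, TensorProduct.map_smul_left, TensorProduct.map_smul_right,
      LinearMap.add_apply, LinearMap.smul_apply, RingHom.id_apply, smul_add]

/-- Hom-Lie algebra axioms. -/
def IsHomLie (β : L →ₗ[k] L →ₗ[k] L) (α : L →ₗ[k] L) : Prop :=
  (∀ x y, β x y = - β y x) ∧
  (∀ x y, α (β x y) = β (α x) (α y)) ∧
  (∀ x y z, β (β x y) (α z) + β (β z x) (α y) + β (β y z) (α x) = 0)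

/-- Hom-Lie coalgebra axioms. -/
def IsHomLieCoalg (Δ : L →ₗ[k] L ⊗[k] L) (α : L →ₗ[k] L) : Prop :=
  (∀ x, Δ (α x) = TensorProduct.map α α (Δ x)) ∧
  (∀ x, TensorProduct.comm k L L (Δ x) = - Δ x) ∧
  (∀ x, cycSum (TensorProduct.map α Δ (Δ x)) = 0)

/-- Hom-Lie bialgebra axioms. -/
def IsHomLieBialg (β : L →ₗ[k] L →ₗ[k] L) (Δ : L →ₗ[k] L ⊗[k] L) (α : L →ₗ[k] L) : Prop :=
  IsHomLie β α ∧ IsHomLieCoalg Δ α ∧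
  (∀ x y, Δ (β x y) = adT2 β α (α x) (Δ y) - adT2 β α (α y) (Δ x))

section AuxDefs

variable (β : L →ₗ[k] L →ₗ[k] L) (α : L →ₗ[k] L)

@[simp] lemma cyc_tmul (u v w : L) : cyc (u ⊗ₜ[k] (v ⊗ₜ[k] w)) = w ⊗ₜ[k] (u ⊗ₜ[k] v) := by
  simp [cyc]

@[simp] lemma adr_apply (r : L ⊗[k] L) (x : L) : adr β α r x = adT2 β α x r := rfl

/-- first half of `ad`, curried: `y ⊗ s ↦ (β y ⊗ α) s` -/
noncomputable def ev1 : L ⊗[k] (L ⊗[k] L) →ₗ[k] L ⊗[k] L :=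
  TensorProduct.lift (((TensorProduct.mapBilinear (RingHom.id k) L L L L).flip α) ∘ₗ β)

noncomputable def ev2 : L ⊗[k] (L ⊗[k] L) →ₗ[k] L ⊗[k] L :=
  TensorProduct.lift ((TensorProduct.mapBilinear (RingHom.id k) L L L L α) ∘ₗ β)

@[simp] lemma ev1_tmul (y : L) (s : L ⊗[k] L) :
    ev1 β α (y ⊗ₜ s) = TensorProduct.map (β y) α s := by simp [ev1, TensorProduct.mapBilinear]

@[simp] lemma ev2_tmul (y : L) (s : L ⊗[k] L) :
    ev2 β α (y ⊗ₜ s) = TensorProduct.map α (β y) s := by simp [ev2, TensorProduct.mapBilinear]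

/-- `u ⊗ s ↦ Σ α u₁ ⊗ (β u₂ ⊗ α) s` -/
noncomputable def mixA : (L ⊗[k] L) ⊗[k] (L ⊗[k] L) →ₗ[k] L ⊗[k] (L ⊗[k] L) :=
  (TensorProduct.map α (ev1 β α)) ∘ₗ (TensorProduct.assoc k L L (L ⊗[k] L)).toLinearMap

noncomputable def mixB : (L ⊗[k] L) ⊗[k] (L ⊗[k] L) →ₗ[k] L ⊗[k] (L ⊗[k] L) :=
  (TensorProduct.map α (ev2 β α)) ∘ₗ (TensorProduct.assoc k L L (L ⊗[k] L)).toLinearMap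

@[simp] lemma mixA_tmul (u v : L) (s : L ⊗[k] L) :
    mixA β α ((u ⊗ₜ v) ⊗ₜ s) = α u ⊗ₜ TensorProduct.map (β v) α s := by simp [mixA]

@[simp] lemma mixB_tmul (u v : L) (s : L ⊗[k] L) :
    mixB β α ((u ⊗ₜ v) ⊗ₜ s) = α u ⊗ₜ TensorProduct.map α (β v) s := by simp [mixB]

/-- `u ⊗ (a⊗b) ↦ α²a ⊗ ((β(αb) ⊗ α) u)` -/
noncomputable def qA : (L ⊗[k] L) ⊗[k] (L ⊗[k] L) →ₗ[k] L ⊗[k] (L ⊗[k] L) :=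
  ((TensorProduct.map (α ∘ₗ α) ((ev1 β α) ∘ₗ (TensorProduct.map α LinearMap.id))) ∘ₗ
    (TensorProduct.assoc k L L (L ⊗[k] L)).toLinearMap) ∘ₗ
    (TensorProduct.comm k (L ⊗[k] L) (L ⊗[k] L)).toLinearMap

noncomputable def qB : (L ⊗[k] L) ⊗[k] (L ⊗[k] L) →ₗ[k] L ⊗[k] (L ⊗[k] L) :=
  ((TensorProduct.map (α ∘ₗ α) ((ev2 β α) ∘ₗ (TensorProduct.map α LinearMap.id))) ∘ₗ
    (TensorProduct.assoc k L L (L ⊗[k] L)).toLinearMap) ∘ₗ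
    (TensorProduct.comm k (L ⊗[k] L) (L ⊗[k] L)).toLinearMap

@[simp] lemma qA_tmul (a b : L) (u : L ⊗[k] L) :
    qA β α (u ⊗ₜ (a ⊗ₜ b)) = α (α a) ⊗ₜ TensorProduct.map (β (α b)) α u := by simp [qA]

@[simp] lemma qB_tmul (a b : L) (u : L ⊗[k] L) :
    qB β α (u ⊗ₜ (a ⊗ₜ b)) = α (α a) ⊗ₜ TensorProduct.map α (β (α b)) u := by simp [qB]

end AuxDefs
section AuxLemmas

variable (β : L →ₗ[k] L →ₗ[k] L) (α : L →ₗ[k] L)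

/-- the twist commutes with `ad_x`. -/
lemma comm_adT2 (x : L) :
    (TensorProduct.comm k L L).toLinearMap ∘ₗ adT2 β α x
      = adT2 β α x ∘ₗ (TensorProduct.comm k L L).toLinearMap := by
  ext a b
  simp [adT2]
  abel

/-- `α ⊗ α` intertwines `ad_x` and `ad_{α x}`. -/
lemma F_adT2 (hmult : ∀ x y, α (β x y) = β (α x) (α y)) (x : L) :
    TensorProduct.map α α ∘ₗ adT2 β α x = adT2 β α (α x) ∘ₗ TensorProduct.map α α := by
  ext a b
  simp [adT2, hmult]

/-- `α ⊗ α ⊗ α` intertwines `ad_x` and `ad_{α x}` on triple tensors. -/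
lemma A3_adT3 (hmult : ∀ x y, α (β x y) = β (α x) (α y)) (x : L) :
    TensorProduct.map α (TensorProduct.map α α) ∘ₗ adT3 β α x
      = adT3 β α (α x) ∘ₗ TensorProduct.map α (TensorProduct.map α α) := by
  ext a b c
  simp [adT3, hmult]

/-- `cycSum` commutes with `ad_x` on triple tensors. -/
lemma cycSum_adT3 (x : L) :
    cycSum ∘ₗ adT3 β α x = adT3 β α x ∘ₗ cycSum := by
  ext a b c
  simp [adT3, cycSum]
  abel

/-- `cycSum` commutes with `α ⊗ α ⊗ α`. -/
lemma cycSum_A3 :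
    cycSum ∘ₗ TensorProduct.map α (TensorProduct.map α α)
      = TensorProduct.map α (TensorProduct.map α α) ∘ₗ cycSum := by
  ext a b c
  simp [cycSum]

/-- `α⊗α⊗α` intertwines the `chybe` maps with `(α⊗α) ⊗ (α⊗α)`. -/
lemma A3_chybe (hmult : ∀ x y, α (β x y) = β (α x) (α y)) :
    TensorProduct.map α (TensorProduct.map α α) ∘ₗ (c1213 β α + c1223 β α + c1323 β α)
      = (c1213 β α + c1223 β α + c1323 β α) ∘ₗ
          TensorProduct.map (TensorProduct.map α α) (TensorProduct.map α α) := by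
  ext a b c d
  simp [c1213, c1223, c1323, hmult, tmul_add, add_tmul]

end AuxLemmas
section AuxLemmas2

variable (β : L →ₗ[k] L →ₗ[k] L) (α : L →ₗ[k] L)

/-- derived form of the Hom-Jacobi identity. -/
lemma jac2 (hskew : ∀ x y, β x y = - β y x)
    (hjac : ∀ x y z, β (β x y) (α z) + β (β z x) (α y) + β (β y z) (α x) = 0)
    (x u v : L) :
    β (α x) (β u v) = β (β x u) (α v) - β (β x v) (α u) := by
  have j := hjac x u v
  rw [hskew (β u v) (α x), hskew v x] at j
  simp only [map_neg, LinearMap.neg_apply] at j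
  have j' := neg_eq_zero.mpr j
  apply eq_of_sub_eq_zero
  rw [← j']
  abel

/-- another derived form of the Hom-Jacobi identity. -/
lemma jac3 (hskew : ∀ x y, β x y = - β y x)
    (hjac : ∀ x y z, β (β x y) (α z) + β (β z x) (α y) + β (β y z) (α x) = 0)
    (x y a : L) :
    β (β x y) (α a) = β (β x a) (α y) - β (β y a) (α x) := by
  have j := hjac x y a
  rw [hskew a x] at j
  simp only [map_neg, LinearMap.neg_apply] at j
  apply eq_of_sub_eq_zero
  rw [← j]
  abel

/-- Hom-compatibility of `ad` with the bracket. -/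
lemma adT2_compat (hskew : ∀ x y, β x y = - β y x)
    (hmult : ∀ x y, α (β x y) = β (α x) (α y))
    (hjac : ∀ x y z, β (β x y) (α z) + β (β z x) (α y) + β (β y z) (α x) = 0)
    (x y : L) :
    adT2 β α (α x) ∘ₗ adT2 β α y - adT2 β α (α y) ∘ₗ adT2 β α x
      = adT2 β α (β x y) ∘ₗ TensorProduct.map α α := by
  ext a b
  simp [adT2, hmult, tmul_add, add_tmul, tmul_sub, sub_tmul]
  rw [jac2 β α hskew hjac x y a, jac2 β α hskew hjac x y b,
    jac2 β α hskew hjac y x a, jac2 β α hskew hjac y x b,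
    hskew y x]
  simp only [map_neg, LinearMap.neg_apply, TensorProduct.neg_tmul, TensorProduct.tmul_neg,
    TensorProduct.sub_tmul, TensorProduct.tmul_sub]
  abel_nf
  rw [jac3 β α hskew hjac x y a, jac3 β α hskew hjac x y b]
  simp only [TensorProduct.sub_tmul, TensorProduct.tmul_sub]
  abel

end AuxLemmas2
section AuxLemmas3

variable (β : L →ₗ[k] L →ₗ[k] L) (α : L →ₗ[k] L) (Δ : L →ₗ[k] L ⊗[k] L)

/-- `α⊗α⊗α` intertwines `α ⊗ Δ` with `α ⊗ α`. -/
lemma A3_mapαΔ (hcomul : ∀ x, Δ (α x) = TensorProduct.map α α (Δ x)) :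
    TensorProduct.map α (TensorProduct.map α α) ∘ₗ TensorProduct.map α Δ
      = TensorProduct.map α Δ ∘ₗ TensorProduct.map α α := by
  ext a b
  simp [hcomul]

/-- `α ⊗ ad(s)` through `mixA + mixB`. -/
lemma mapα_adr (s w : L ⊗[k] L) :
    TensorProduct.map α (adr β α s) w = (mixA β α + mixB β α) (w ⊗ₜ s) := by
  have : TensorProduct.map α (adr β α s)
      = (mixA β α + mixB β α) ∘ₗ (TensorProduct.mk k (L ⊗[k] L) (L ⊗[k] L)).flip s := by
    ext a b
    simp [adT2, tmul_add]
  rw [this]; rfl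

/-- the correction map through `qA + qB`. -/
lemma adrα_q (u s : L ⊗[k] L) :
    TensorProduct.map (α ∘ₗ α) ((adr β α u) ∘ₗ α) s = (qA β α + qB β α) (u ⊗ₜ s) := by
  have : TensorProduct.map (α ∘ₗ α) ((adr β α u) ∘ₗ α)
      = (qA β α + qB β α) ∘ₗ (TensorProduct.mk k (L ⊗[k] L) (L ⊗[k] L)) u := by
    ext a b
    simp [adT2, tmul_add]
  rw [this]; rfl

/-- key exchange identity: `(α ⊗ Δ) ∘ ad_x`. -/
lemma AI (hmult : ∀ x y, α (β x y) = β (α x) (α y))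
    (hcomul : ∀ x, Δ (α x) = TensorProduct.map α α (Δ x))
    (hcompat : ∀ x y, Δ (β x y) = adT2 β α (α x) (Δ y) - adT2 β α (α y) (Δ x))
    (x : L) :
    TensorProduct.map α Δ ∘ₗ adT2 β α x
      = adT3 β α (α x) ∘ₗ TensorProduct.map α Δ
        - TensorProduct.map (α ∘ₗ α) ((adr β α (Δ x)) ∘ₗ α) := by
  ext a b
  simp [adT2, adT3, hcomul, hcompat, tmul_add, add_tmul, tmul_sub, sub_tmul, hmult]
  abel

end AuxLemmas3
section BigIdentities

variable (β : L →ₗ[k] L →ₗ[k] L) (α : L →ₗ[k] L)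

/-- mixed-term exchange identity. -/
lemma CI (hskew : ∀ x y, β x y = - β y x) :
    cycSum ∘ₗ (mixA β α + mixB β α) ∘ₗ
        TensorProduct.map (LinearMap.id (R := k) (M := L ⊗[k] L)) (TensorProduct.map α α)
      = - (cycSum ∘ₗ qB β α ∘ₗ
            TensorProduct.map LinearMap.id (TensorProduct.comm k L L).toLinearMap)
        - cycSum ∘ₗ qA β α ∘ₗ
            TensorProduct.map (TensorProduct.comm k L L).toLinearMap LinearMap.id := by
  ext u1 u2 a b
  simp [cycSum, tmul_add, add_tmul]
  rw [hskew u2 (α a), hskew u2 (α b)]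
  simp only [TensorProduct.neg_tmul, TensorProduct.tmul_neg]
  abel

end BigIdentities
section GrandIdentity

variable (β : L →ₗ[k] L →ₗ[k] L) (α : L →ₗ[k] L)

/-- the grand quadratic identity behind the twisting of the co-Jacobi identity. -/
lemma GI (hskew : ∀ x y, β x y = - β y x)
    (hmult : ∀ x y, α (β x y) = β (α x) (α y))
    (hjac : ∀ x y z, β (β x y) (α z) + β (β z x) (α y) + β (β y z) (α x) = 0)
    (x : L) :
    adT3 β α (α x) ∘ₗ (c1213 β α + c1223 β α + c1323 β α)
      = (mixA β α + mixB β α) ∘ₗ TensorProduct.map (adT2 β α x) (TensorProduct.map α α)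
        + cyc ∘ₗ mixB β α ∘ₗ TensorProduct.map (adT2 β α x) LinearMap.id ∘ₗ
            TensorProduct.map (TensorProduct.comm k L L).toLinearMap
              (TensorProduct.map α α ∘ₗ (TensorProduct.comm k L L).toLinearMap)
        - (cyc ∘ₗ cyc) ∘ₗ (mixA β α + mixB β α) ∘ₗ
            TensorProduct.map (adT2 β α x) LinearMap.id ∘ₗ
            TensorProduct.map (TensorProduct.comm k L L).toLinearMap
              (TensorProduct.map α α) ∘ₗ
            (TensorProduct.comm k (L ⊗[k] L) (L ⊗[k] L)).toLinearMap
        - cyc ∘ₗ mixA β α ∘ₗ TensorProduct.map (adT2 β α x) LinearMap.id ∘ₗ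
            TensorProduct.map LinearMap.id
              (TensorProduct.map α α ∘ₗ (TensorProduct.comm k L L).toLinearMap) ∘ₗ
            (TensorProduct.comm k (L ⊗[k] L) (L ⊗[k] L)).toLinearMap := by
  ext a b c d
  simp [adT2, adT3, c1213, c1223, c1323, hmult, tmul_add, add_tmul, tmul_sub, sub_tmul]
  rw [jac2 β α hskew hjac x a c, jac2 β α hskew hjac x b c, jac2 β α hskew hjac x b d]
  rw [hskew (α c) (α a), hskew (α c) (α b), hskew (α d) (α b)]
  simp only [TensorProduct.neg_tmul, TensorProduct.tmul_neg, TensorProduct.sub_tmul,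
    TensorProduct.tmul_sub, map_neg, LinearMap.neg_apply]
  abel

end GrandIdentity
/-- perturbing the cobracket of a Hom-Lie bialgebra by `ad(t)` for a
suitable `t` yields another Hom-Lie bialgebra. -/
theorem stmt18 {k : Type*} [Field k] [CharZero k] {L : Type*} [AddCommGroup L] [Module k L]
    (β : L →ₗ[k] L →ₗ[k] L) (Δ : L →ₗ[k] L ⊗[k] L) (α : L →ₗ[k] L)
    (hbi : IsHomLieBialg β Δ α)
    (t : L ⊗[k] L)
    (ht : TensorProduct.map α α t = t)
    (hanti : TensorProduct.comm k L L t = - t)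
    (hpert : ∀ x : L,
      TensorProduct.map α (TensorProduct.map α α)
        (adT3 β α x (chybe β α t t + cycSum (TensorProduct.map α Δ t))) = 0) :
    IsHomLieBialg β (Δ + adr β α t) α := by
  obtain ⟨⟨hskew, hmult, hjac⟩, ⟨hcomul, hcoanti, hcojac⟩, hcompat⟩ := hbi
  refine ⟨⟨hskew, hmult, hjac⟩, ⟨?_, ?_, ?_⟩, ?_⟩
  · -- comultiplicativity
    intro z
    have h2 := LinearMap.congr_fun (F_adT2 β α hmult z) t
    simp only [LinearMap.comp_apply] at h2
    simp only [LinearMap.add_apply, adr_apply, map_add, hcomul z]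
    rw [h2, ht]
  · -- anti-cocommutativity
    intro z
    have h2 := LinearMap.congr_fun (comm_adT2 β α z) t
    simp only [LinearMap.comp_apply, LinearEquiv.coe_coe] at h2
    simp only [LinearMap.add_apply, adr_apply, map_add, hcoanti z]
    rw [h2, hanti, map_neg]
    abel
  · -- co-Jacobi identity
    intro z
    -- the four pieces
    have hT3 : cycSum (TensorProduct.map α (adr β α t) (Δ z))
        = cycSum ((qA β α + qB β α) (Δ z ⊗ₜ t)) := by
      rw [mapα_adr β α t (Δ z)]
      have hci := LinearMap.congr_fun (CI β α hskew) (Δ z ⊗ₜ[k] t)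
      simp only [LinearMap.comp_apply, LinearMap.sub_apply, LinearMap.neg_apply,
        LinearMap.add_apply, TensorProduct.map_tmul, LinearMap.id_coe, id_eq,
        LinearEquiv.coe_coe, ht, hanti, hcoanti z, TensorProduct.tmul_neg,
        TensorProduct.neg_tmul, map_neg, neg_neg] at hci
      simp only [LinearMap.add_apply, map_add, sub_neg_eq_add] at hci ⊢
      rw [hci]
      abel
    have hT2 : cycSum (TensorProduct.map α Δ (adT2 β α z t))
        = adT3 β α (α z) (cycSum (TensorProduct.map α Δ t))
          - cycSum ((qA β α + qB β α) (Δ z ⊗ₜ t)) := by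
      have hai := LinearMap.congr_fun (AI β α Δ hmult hcomul hcompat z) t
      simp only [LinearMap.comp_apply, LinearMap.sub_apply] at hai
      rw [hai, map_sub, adrα_q β α (Δ z) t]
      have hcs := LinearMap.congr_fun (cycSum_adT3 β α (α z)) (TensorProduct.map α Δ t)
      simp only [LinearMap.comp_apply] at hcs
      rw [hcs]
    have hT4 : cycSum (TensorProduct.map α (adr β α t) (adT2 β α z t))
        = adT3 β α (α z) (chybe β α t t) := by
      rw [mapα_adr β α t (adT2 β α z t)]
      have hgi := LinearMap.congr_fun (GI β α hskew hmult hjac z) (t ⊗ₜ[k] t)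
      simp only [LinearMap.comp_apply, LinearMap.sub_apply, LinearMap.add_apply,
        LinearEquiv.coe_coe, TensorProduct.map_tmul, TensorProduct.comm_tmul,
        LinearMap.id_coe, id_eq, ht, hanti, TensorProduct.tmul_neg,
        TensorProduct.neg_tmul, map_neg, neg_neg, sub_neg_eq_add] at hgi
      simp only [cycSum, LinearMap.add_apply, LinearMap.comp_apply, LinearMap.id_coe, id_eq,
        map_add]
      rw [show chybe β α t t = c1213 β α (t ⊗ₜ[k] t) + c1223 β α (t ⊗ₜ[k] t)
        + c1323 β α (t ⊗ₜ[k] t) from rfl]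
      rw [hgi]
      simp only [map_add]
      abel
    have hK : adT3 β α (α z) (cycSum (TensorProduct.map α Δ t) + chybe β α t t) = 0 := by
      have h6 : TensorProduct.map α (TensorProduct.map α α) (chybe β α t t)
          = chybe β α t t := by
        have := LinearMap.congr_fun (A3_chybe β α hmult) (t ⊗ₜ[k] t)
        simp only [LinearMap.comp_apply, LinearMap.add_apply, TensorProduct.map_tmul, ht,
          map_add] at this
        simpa [chybe, map_add] using this
      have h7 : TensorProduct.map α (TensorProduct.map α α) (cycSum (TensorProduct.map α Δ t))
          = cycSum (TensorProduct.map α Δ t) := by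
        have hc := LinearMap.congr_fun (cycSum_A3 α) (TensorProduct.map α Δ t)
        simp only [LinearMap.comp_apply] at hc
        have hd := LinearMap.congr_fun (A3_mapαΔ α Δ hcomul) t
        simp only [LinearMap.comp_apply, ht] at hd
        rw [← hc, hd]
      have h5 := LinearMap.congr_fun (A3_adT3 β α hmult z)
        (chybe β α t t + cycSum (TensorProduct.map α Δ t))
      simp only [LinearMap.comp_apply] at h5
      rw [hpert z] at h5
      rw [map_add, h6, h7] at h5
      rw [map_add]
      rw [map_add] at h5
      rw [add_comm] at h5
      exact h5.symm
    -- assembling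
    have e0 : (Δ + adr β α t) z = Δ z + adT2 β α z t := by
      simp only [LinearMap.add_apply, adr_apply]
    have emap : TensorProduct.map α (Δ + adr β α t)
        = TensorProduct.map α Δ + TensorProduct.map α (adr β α t) :=
      TensorProduct.map_add_right α Δ (adr β α t)
    rw [e0, emap]
    simp only [LinearMap.add_apply, map_add]
    rw [hcojac z, hT2, hT3, hT4]
    rw [map_add] at hK
    abel_nf
    abel_nf at hK
    exact hK
  · -- compatibility
    intro z y
    have h2 := LinearMap.congr_fun (adT2_compat β α hskew hmult hjac z y) t
    simp only [LinearMap.comp_apply, LinearMap.sub_apply] at h2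
    rw [ht] at h2
    simp only [LinearMap.add_apply, adr_apply, hcompat z y, map_add]
    rw [← h2]
    abel
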